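/- Let f : [0,∞) → ℝ be strictly increasing, convex, with f(0) = 0 and f(ℕ) ⊆ ℕ, and let A₁, ..., A_k be arbitrary n×n matrices over a field F of characteristic zero with stable ranks q_j = rank(A_j^n). Set r(m) = Σ_j f(rank(A_j^m)). Then there exists B ∈ M_{n×n}(F) with r(m) = rank(B^m) for all m ∈ {1, ..., n} if and only if 2r(1) − r(2) ≤ n. -/

import Mathlib

open Matrix Submodule Set Finset Module

set_option synthInstance.maxHeartbeats 400000
set_option maxHeartbeats 1000000

section aux
variable {F : Type*} [Field F] {n : ℕ}

lemma finrank_map_add_aux (l : (Fin n → F) →ₗ[F] (Fin n → F)) (W : Submodule F (Fin n → F)) :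
    finrank F (W.map l) + finrank F (LinearMap.ker l ⊓ W : Submodule F (Fin n → F)) = finrank F W := by
  have h1 := LinearMap.finrank_range_add_finrank_ker (l ∘ₗ W.subtype)
  have hr : LinearMap.range (l ∘ₗ W.subtype) = W.map l := by
    rw [LinearMap.range_comp, Submodule.range_subtype]
  have hk : LinearMap.ker (l ∘ₗ W.subtype) = Submodule.comap W.subtype (LinearMap.ker l ⊓ W) := by
    rw [LinearMap.ker_comp]
    ext x
    simp only [Submodule.mem_comap, Submodule.mem_inf, LinearMap.mem_ker]
    exact ⟨fun h => ⟨h, x.2⟩, fun h => h.1⟩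
  have e := Submodule.comapSubtypeEquivOfLe (inf_le_right : LinearMap.ker l ⊓ W ≤ W)
  have e2 : finrank F (Submodule.comap W.subtype (LinearMap.ker l ⊓ W)) =
      finrank F (LinearMap.ker l ⊓ W : Submodule F (Fin n → F)) := e.finrank_eq
  rw [hr, hk, e2] at h1
  exact h1

lemma rank_pow_succ_eq (M : Matrix (Fin n) (Fin n) F) (m : ℕ) :
    (M ^ m).rank = (M ^ (m+1)).rank +
      finrank F (LinearMap.ker M.mulVecLin ⊓ LinearMap.range (M ^ m).mulVecLin : Submodule F (Fin n → F)) := by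
  have h := finrank_map_add_aux M.mulVecLin (LinearMap.range (M ^ m).mulVecLin)
  have h2 : (LinearMap.range (M ^ m).mulVecLin).map M.mulVecLin = LinearMap.range (M ^ (m+1)).mulVecLin := by
    rw [pow_succ', Matrix.mulVecLin_mul, LinearMap.range_comp]
  rw [h2] at h
  rw [Matrix.rank, Matrix.rank, ← h]

lemma range_pow_mono (M : Matrix (Fin n) (Fin n) F) (m : ℕ) :
    LinearMap.range ((M ^ (m+1)).mulVecLin) ≤ LinearMap.range ((M ^ m).mulVecLin) := by
  rw [pow_succ, Matrix.mulVecLin_mul, LinearMap.range_comp]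
  exact LinearMap.map_le_range

lemma rank_pow_convex (M : Matrix (Fin n) (Fin n) F) (m : ℕ) :
    2 * (M ^ (m+1)).rank ≤ (M ^ m).rank + (M ^ (m+2)).rank := by
  have h1 := rank_pow_succ_eq M m
  have h2 := rank_pow_succ_eq M (m+1)
  rw [show m+1+1 = m+2 from rfl] at h2
  have h3 : finrank F (LinearMap.ker M.mulVecLin ⊓ LinearMap.range (M ^ (m+1)).mulVecLin : Submodule F (Fin n → F))
      ≤ finrank F (LinearMap.ker M.mulVecLin ⊓ LinearMap.range (M ^ m).mulVecLin : Submodule F (Fin n → F)) :=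
    Submodule.finrank_mono (inf_le_inf_left _ (range_pow_mono M m))
  omega

lemma rank_sylvester (M : Matrix (Fin n) (Fin n) F) :
    M.rank + M.rank ≤ n + (M ^ 2).rank := by
  have h1 := rank_pow_succ_eq M 1
  rw [show (1:ℕ)+1 = 2 from rfl, pow_one] at h1
  have h3 : finrank F (LinearMap.ker M.mulVecLin ⊓ LinearMap.range (M ^ 1).mulVecLin : Submodule F (Fin n → F))
      ≤ finrank F (LinearMap.ker M.mulVecLin) :=
    Submodule.finrank_mono inf_le_left
  rw [pow_one] at h3
  have h4 := LinearMap.finrank_range_add_finrank_ker M.mulVecLin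
  have h5 : finrank F (Fin n → F) = n := by simp
  have h6 : finrank F (LinearMap.range M.mulVecLin) = M.rank := rfl
  omega

end aux

section partialperm
variable {F : Type*} [Field F] {N : ℕ}

lemma rank_of_partial (g : Fin N → Option (Fin N))
    (hinj : ∀ j j' a, g j = some a → g j' = some a → j = j') :
    (Matrix.of fun i j => if g j = some i then (1:F) else 0).rank
      = (Finset.univ.filter fun j => (g j).isSome).card := by
  classical
  set M : Matrix (Fin N) (Fin N) F := Matrix.of fun i j => if g j = some i then (1:F) else 0 with hM
  set Sf : Finset (Fin N) := Finset.univ.filter (fun a => ∃ j, g j = some a) with hSf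
  have hspan : Submodule.span F (Set.range Mᵀ) =
      Submodule.span F ((fun a : Fin N => Pi.single a (1:F)) '' ↑Sf) := by
    apply le_antisymm
    · rw [Submodule.span_le]
      rintro _ ⟨j, rfl⟩
      cases hj : g j with
      | none =>
        have : Mᵀ j = 0 := by
          funext i
          simp [hM, Matrix.transpose_apply, hj]
        rw [this]
        exact Submodule.zero_mem _
      | some a =>
        have : Mᵀ j = Pi.single a (1:F) := by
          funext i
          simp only [hM, Matrix.transpose_apply, Matrix.of_apply, hj, Option.some.injEq,
            Pi.single_apply]
          by_cases h : a = i
          · subst h; simp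
          · simp [h, Ne.symm h]
        rw [this]
        apply Submodule.subset_span
        exact ⟨a, by simp [hSf]; exact ⟨j, hj⟩, rfl⟩
    · rw [Submodule.span_le]
      rintro _ ⟨a, ha, rfl⟩
      simp only [hSf, Finset.coe_filter, Finset.mem_univ, true_and, Set.mem_setOf_eq] at ha
      obtain ⟨j, hj⟩ := ha
      apply Submodule.subset_span
      refine ⟨j, ?_⟩
      funext i
      simp only [hM, Matrix.transpose_apply, Matrix.of_apply, hj, Option.some.injEq,
        Pi.single_apply]
      by_cases h : a = i
      · subst h; simp
      · simp [h, Ne.symm h]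
  have hli : LinearIndependent F (fun a : {x // x ∈ Sf} => (Pi.single (a : Fin N) (1:F) : Fin N → F)) := by
    have := (Pi.basisFun F (Fin N)).linearIndependent
    have h2 := this.comp (fun a : {x // x ∈ Sf} => (a : Fin N)) Subtype.val_injective
    convert h2 using 1
    funext a
    simp [Pi.basisFun_apply]
  have hrange : Set.range (fun a : {x // x ∈ Sf} => (Pi.single (a : Fin N) (1:F) : Fin N → F)) =
      (fun a : Fin N => Pi.single a (1:F)) '' ↑Sf := by
    ext v
    constructor
    · rintro ⟨a, rfl⟩; exact ⟨a, a.2, rfl⟩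
    · rintro ⟨a, ha, rfl⟩; exact ⟨⟨a, ha⟩, rfl⟩
  have hcard : M.rank = Sf.card := by
    rw [Matrix.rank, Matrix.range_mulVecLin, Matrix.col, hspan, ← hrange, finrank_span_eq_card hli,
      Fintype.card_coe]
  rw [hcard]
  have key : ∀ a ∈ Sf, ∃ j, g j = some a := by
    intro a ha
    simpa [hSf] using (Finset.mem_filter.mp ha).2
  refine Finset.card_bij (fun a ha => (key a ha).choose) ?_ ?_ ?_
  · intro a ha
    simp only [Finset.mem_filter, Finset.mem_univ, true_and]
    rw [(key a ha).choose_spec]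
    rfl
  · intro a ha a' ha' h
    have h1 := (key a ha).choose_spec
    have h2 := (key a' ha').choose_spec
    rw [h, h2] at h1
    exact Option.some_injective _ h1.symm
  · intro j hj
    simp only [Finset.mem_filter, Finset.mem_univ, true_and] at hj
    obtain ⟨a, hja⟩ := Option.isSome_iff_exists.mp hj
    have haS : a ∈ Sf := by simp [hSf]; exact ⟨j, hja⟩
    refine ⟨a, haS, ?_⟩
    exact hinj _ _ _ ((key a haS).choose_spec) hja

end partialperm

section partialperm2
variable {F : Type*} [Field F] {N : ℕ}

lemma iter_bind_none (ψ : ℕ → Option ℕ) (m : ℕ) :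
    (fun o => Option.bind o ψ)^[m] none = none := by
  induction m with
  | zero => rfl
  | succ m ih => rw [Function.iterate_succ_apply, Option.bind]; exact ih

lemma pow_of_partial (ψ : ℕ → Option ℕ) (hbd : ∀ x, x < N → ∀ v, ψ x = some v → v < N)
    (m : ℕ) (i j : Fin N) :
    ((Matrix.of fun i j : Fin N => if ψ (j:ℕ) = some (i:ℕ) then (1:F) else 0) ^ m) i j
      = if (fun o => Option.bind o ψ)^[m] (some (j:ℕ)) = some (i:ℕ) then 1 else 0 := by
  induction m generalizing j with
  | zero =>
    simp only [pow_zero, Function.iterate_zero, id_eq, Matrix.one_apply, Option.some.injEq]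
    refine if_congr ?_ rfl rfl
    rw [Fin.ext_iff]
    omega
  | succ m ih =>
    rw [pow_succ, Matrix.mul_apply]
    cases hj : ψ (j:ℕ) with
    | none =>
      have : ∀ l : Fin N, ((Matrix.of fun i j : Fin N => if ψ (j:ℕ) = some (i:ℕ) then (1:F) else 0)) l j = 0 := by
        intro l
        simp [hj]
      simp only [this, mul_zero, Finset.sum_const_zero]
      rw [Function.iterate_succ_apply]
      have hb : (some (j:ℕ)).bind ψ = none := by simp [hj]
      rw [hb, iter_bind_none]
      simp
    | some v =>
      have hv : v < N := hbd _ j.2 _ hj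
      have hstep : (fun o => Option.bind o ψ)^[m+1] (some (j:ℕ))
          = (fun o => Option.bind o ψ)^[m] (some v) := by
        rw [Function.iterate_succ_apply]
        simp [hj]
      rw [hstep, ← ih ⟨v, hv⟩]
      rw [Finset.sum_eq_single ⟨v, hv⟩]
      · simp [hj]
      · intro l _ hl
        have : ψ (j:ℕ) = some (l:ℕ) → False := by
          intro h
          rw [hj] at h
          apply hl
          apply Fin.ext
          simpa using h.symm
        simp only [Matrix.of_apply]
        rw [if_neg this]
        simp
      · intro h
        exact absurd (Finset.mem_univ _) h

end partialperm2

lemma exists_B (F : Type*) [Field F] (n : ℕ) (hn : 1 ≤ n) (t : ℕ → ℕ)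
    (ht0 : t 0 = n) (hdec : ∀ m, t (m+1) ≤ t m) (hcv : ∀ m, 2 * t (m+1) ≤ t m + t (m+2)) :
    ∃ B : Matrix (Fin n) (Fin n) F, ∀ m, 1 ≤ m → m ≤ n → (B ^ m).rank = t m := by
  classical
  -- antitone
  have tanti : ∀ a b : ℕ, a ≤ b → t b ≤ t a := by
    intro a b hab
    induction b with
    | zero =>
      have h0 : a = 0 := by omega
      subst h0
      exact le_rfl
    | succ b ih =>
      rcases Nat.lt_or_ge a (b+1) with h | h
      · exact le_trans (hdec b) (ih (by omega))
      · have h0 : a = b + 1 := by omega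
        subst h0
        exact le_rfl
  -- difference monotone
  have cmono : ∀ a b : ℕ, a ≤ b → t b + t (a+1) ≤ t a + t (b+1) := by
    intro a b hab
    induction b with
    | zero =>
      have h0 : a = 0 := by omega
      subst h0
      exact le_rfl
    | succ b ih =>
      rcases Nat.lt_or_ge a (b+1) with h | h
      · have h1 := ih (by omega)
        have h2 := hcv b
        have h3 : b + 1 + 1 = b + 2 := by omega
        rw [h3]
        omega
      · have h0 : a = b + 1 := by omega
        subst h0
        exact le_rfl
  set L : ℕ → ℕ := fun x => Nat.findGreatest (fun m => x < t m) n with hLdef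
  have hL : ∀ x, x < n → x < t (L x) := by
    intro x hx
    exact Nat.findGreatest_spec (P := fun m => x < t m) (Nat.zero_le n) (show x < t 0 by omega)
  have hLle : ∀ x, L x ≤ n := fun x => Nat.findGreatest_le n
  have hLlt : ∀ x, t n ≤ x → x < n → L x < n := by
    intro x hx1 hx2
    have h1 := hL x hx2
    rcases Nat.lt_or_ge (L x) n with h | h
    · exact h
    · have : L x = n := le_antisymm (hLle x) h
      rw [this] at h1
      omega
  have hLsucc : ∀ x, t n ≤ x → x < n → t (L x + 1) ≤ x := by
    intro x hx1 hx2
    have h1 := hLlt x hx1 hx2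
    have h2 := Nat.findGreatest_is_greatest (P := fun m => x < t m)
      (Nat.lt_succ_self (L x)) (by omega)
    rw [Nat.succ_eq_add_one] at h2
    omega
  have hLchar : ∀ x m, m ≤ n → t (m+1) ≤ x → x < t m → L x = m := by
    intro x m hmn h1 h2
    have h3 : m ≤ L x := Nat.le_findGreatest hmn h2
    rcases Nat.lt_or_ge m (L x) with h | h
    · have h4 : t (L x) ≤ t (m+1) := tanti _ _ (by omega)
      have h5 : x < t (L x) := hL x (by have := tanti 0 m (Nat.zero_le m); omega)
      omega
    · omega
  set ψ : ℕ → Option ℕ := fun x =>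
    if x < t n then some x
    else if x < t 1 then some (t (L x) + (x - t (L x + 1)))
    else none with hψdef
  set Ψ : Option ℕ → Option ℕ := fun o => o.bind ψ with hΨdef
  -- value in layer: key bound
  have layerval : ∀ x, t n ≤ x → x < t 1 → x < n →
      ψ x = some (t (L x) + (x - t (L x + 1))) ∧
      t (L x) ≤ t (L x) + (x - t (L x + 1)) ∧
      t (L x) + (x - t (L x + 1)) < t (L x - 1) ∧ 1 ≤ L x := by
    intro x hx1 hx2 hxn
    have hψx : ψ x = some (t (L x) + (x - t (L x + 1))) := by
      simp only [hψdef]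
      rw [if_neg (by omega), if_pos hx2]
    have hL1 : 1 ≤ L x := Nat.le_findGreatest hn hx2
    have h1 := hL x hxn
    have h2 := hLsucc x hx1 hxn
    have h3 := cmono (L x - 1) (L x) (by omega)
    rw [show L x - 1 + 1 = L x by omega] at h3
    exact ⟨hψx, by omega, by omega, hL1⟩
  -- D1
  have D1 : ∀ m x, x < t n → Ψ^[m] (some x) = some x := by
    intro m
    induction m with
    | zero => intro x _; rfl
    | succ m ih =>
      intro x hx
      rw [Function.iterate_succ_apply]
      have : Ψ (some x) = some x := by
        simp only [hΨdef, hψdef, Option.bind_some]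
        rw [if_pos hx]
      rw [this]
      exact ih x hx
  -- D2
  have D2 : ∀ m x, t n ≤ x → x < n → m ≤ L x →
      Ψ^[m] (some x) = some (t (L x - m + 1) + (x - t (L x + 1))) := by
    intro m
    induction m with
    | zero =>
      intro x hx1 hx2 _
      have h2 := hLsucc x hx1 hx2
      simp only [Function.iterate_zero, id_eq]
      congr 1
      rw [Nat.sub_zero]
      omega
    | succ m ih =>
      intro x hx1 hx2 hm
      have hx3 : x < t 1 := by
        have := tanti 1 (L x) (by omega)
        have := hL x hx2
        omega
      obtain ⟨hψx, hv1, hv2, hL1⟩ := layerval x hx1 hx3 hx2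
      set v := t (L x) + (x - t (L x + 1)) with hvdef
      have hvn : v < n := by
        have := tanti 0 (L x - 1) (Nat.zero_le _)
        omega
      have hvtn : t n ≤ v := le_trans (tanti (L x) n (hLle x)) hv1
      have hLv : L v = L x - 1 := by
        apply hLchar v (L x - 1) (by have := hLle x; omega)
        · rw [show L x - 1 + 1 = L x by omega]; exact hv1
        · exact hv2
      rw [Function.iterate_succ_apply]
      have hstep : Ψ (some x) = some v := by
        simp only [hΨdef, Option.bind_some]
        exact hψx
      rw [hstep]
      have := ih v hvtn hvn (by omega)
      rw [this, hLv]
      congr 2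
      · congr 1
        omega
      · rw [show L x - 1 + 1 = L x by omega]
        have h2 := hLsucc x hx1 hx2
        omega
  -- D3
  have D3 : ∀ m x, t n ≤ x → x < n → L x < m → Ψ^[m] (some x) = none := by
    intro m x hx1 hx2 hm
    have base : Ψ^[L x + 1] (some x) = none := by
      rw [Function.iterate_succ_apply']
      have h1 := D2 (L x) x hx1 hx2 le_rfl
      rw [h1]
      rw [Nat.sub_self, show (0:ℕ)+1 = 1 from rfl]
      set w := t 1 + (x - t (L x + 1)) with hwdef
      have hw1 : t 1 ≤ w := by rw [hwdef]; omega
      have hwn : ¬ w < t n := by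
        have := tanti 1 n hn
        omega
      simp only [hΨdef, hψdef, Option.bind_some]
      rw [if_neg hwn, if_neg (by omega)]
    have : m = (m - (L x + 1)) + (L x + 1) := by omega
    rw [this, Function.iterate_add_apply, base, iter_bind_none]
  -- bound on values
  have vbound : ∀ m x v, x < n → Ψ^[m] (some x) = some v → v < n := by
    intro m x v hx hv
    rcases Nat.lt_or_ge x (t n) with h | h
    · rw [D1 m x h] at hv
      have := Option.some_injective _ hv
      omega
    · rcases Nat.lt_or_ge (L x) m with h2 | h2
      · rw [D3 m x h hx h2] at hv
        exact absurd hv (by simp)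
      · rw [D2 m x h hx h2] at hv
        have hval : v = t (L x - m + 1) + (x - t (L x + 1)) := by
          have := Option.some_injective _ hv
          omega
        have hcm := cmono (L x - m) (L x) (by omega)
        rw [show L x - m + 1 = (L x - m) + 1 from rfl] at hval
        have h5 := hL x hx
        have h6 := hLsucc x h hx
        have h7 := tanti 0 (L x - m) (Nat.zero_le _)
        omega
  -- image bounds for layer case
  have img : ∀ m x, t n ≤ x → x < n → m ≤ L x →
      t (L x - m + 1) ≤ t (L x - m + 1) + (x - t (L x + 1)) ∧
      t (L x - m + 1) + (x - t (L x + 1)) < t (L x - m) := by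
    intro m x hx1 hx2 hm
    have h5 := hL x hx2
    have h6 := hLsucc x hx1 hx2
    have hcm := cmono (L x - m) (L x) (by omega)
    omega
  -- injectivity
  have hinjN : ∀ m a jx jy, jx < n → jy < n → Ψ^[m] (some jx) = some a →
      Ψ^[m] (some jy) = some a → jx = jy := by
    have layercase : ∀ m a x, x < n → t n ≤ x → Ψ^[m] (some x) = some a →
        m ≤ L x ∧ a = t (L x - m + 1) + (x - t (L x + 1)) ∧ L a = L x - m ∧ t n ≤ a := by
      intro m a x hxn hx1 hx
      rcases Nat.lt_or_ge (L x) m with hm | hm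
      · rw [D3 m x hx1 hxn hm] at hx
        exact absurd hx (by simp)
      · rw [D2 m x hx1 hxn hm] at hx
        have ha := Option.some_injective _ hx
        obtain ⟨hb1, hb2⟩ := img m x hx1 hxn hm
        have hLa : L a = L x - m := by
          apply hLchar a (L x - m) (by have := hLle x; omega)
          · rw [show L x - m + 1 = (L x - m) + 1 from rfl] at ha ⊢
            omega
          · omega
        have htn : t n ≤ a := by
          have := tanti (L x - m + 1) n (by have := hLlt x hx1 hxn; omega)
          omega
        exact ⟨hm, ha.symm, hLa, htn⟩
    intro m a jx jy hjx hjy h1 h2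
    rcases Nat.lt_or_ge jx (t n) with cx | cx <;> rcases Nat.lt_or_ge jy (t n) with cy | cy
    · rw [D1 m jx cx] at h1
      rw [D1 m jy cy] at h2
      have := Option.some_injective _ h1
      have := Option.some_injective _ h2
      omega
    · rw [D1 m jx cx] at h1
      have e1 := Option.some_injective _ h1
      obtain ⟨_, _, _, htn⟩ := layercase m a jy hjy cy h2
      omega
    · rw [D1 m jy cy] at h2
      have e2 := Option.some_injective _ h2
      obtain ⟨_, _, _, htn⟩ := layercase m a jx hjx cx h1
      omega
    · obtain ⟨hmx, hax, hLax, _⟩ := layercase m a jx hjx cx h1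
      obtain ⟨hmy, hay, hLay, _⟩ := layercase m a jy hjy cy h2
      have hLeq : L jx = L jy := by omega
      have h6x := hLsucc jx cx hjx
      have h6y := hLsucc jy cy hjy
      rw [hLeq] at hax h6x
      omega
  -- single-step bound
  have hbd1 : ∀ x, x < n → ∀ v, ψ x = some v → v < n := by
    intro x hx v hv
    have h1 : Ψ^[1] (some x) = some v := by
      simp only [Function.iterate_one, hΨdef, Option.bind_some]
      exact hv
    exact vbound 1 x v hx h1
  -- the matrix
  set B : Matrix (Fin n) (Fin n) F :=
    Matrix.of (fun i j : Fin n => if ψ (j:ℕ) = some (i:ℕ) then (1:F) else 0) with hB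
  refine ⟨B, ?_⟩
  intro m hm1 hmn
  set g : Fin n → Option (Fin n) := fun j =>
    (Ψ^[m] (some (j:ℕ))).bind (fun v => if h : v < n then some ⟨v, h⟩ else none) with hg
  have gchar : ∀ (i j : Fin n), (g j = some i ↔ Ψ^[m] (some (j:ℕ)) = some (i:ℕ)) := by
    intro i j
    rw [hg]
    simp only
    cases hv : Ψ^[m] (some (j:ℕ)) with
    | none => simp
    | some v =>
      have hvn : v < n := vbound m (j:ℕ) v j.2 hv
      simp only [Option.bind_some, dif_pos hvn, Option.some.injEq]
      constructor
      · rintro rfl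
        rfl
      · intro h
        apply Fin.ext
        simp [← h]
  have hBm : B ^ m = Matrix.of (fun i j : Fin n => if g j = some i then (1:F) else 0) := by
    ext i j
    rw [hB]
    rw [pow_of_partial ψ hbd1 m i j]
    simp only [Matrix.of_apply]
    refine if_congr ?_ rfl rfl
    rw [← hΨdef, gchar i j]
  rw [hBm, rank_of_partial g (fun j j' a hj hj' => by
    have h1 := (gchar a j).mp hj
    have h2 := (gchar a j').mp hj'
    exact Fin.ext (hinjN m (a:ℕ) (j:ℕ) (j':ℕ) j.2 j'.2 h1 h2))]
  have hiff : ∀ j : Fin n, (g j).isSome ↔ (j : ℕ) < t m := by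
    intro j
    rcases Nat.lt_or_ge (j:ℕ) (t n) with hc | hc
    · have := D1 m (j:ℕ) hc
      have htm : t m ≤ n := by have := tanti 0 m (Nat.zero_le m); omega
      have : (g j).isSome := by
        rw [hg]; simp only [this]
        have hvn : (j:ℕ) < n := j.2
        simp [hvn]
      have h2 : (j:ℕ) < t m := by
        have := tanti m n hmn
        omega
      simp [this, h2]
    · rcases Nat.lt_or_ge (L (j:ℕ)) m with hm | hm
      · have hnone := D3 m (j:ℕ) hc j.2 hm
        have h2 : ¬ (j:ℕ) < t m := by
          have h3 := hLsucc (j:ℕ) hc j.2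
          have := tanti (L (j:ℕ) + 1) m (by omega)
          omega
        rw [hg]
        simp [hnone, h2]
      · have hsome := D2 m (j:ℕ) hc j.2 hm
        have h5 := hL (j:ℕ) j.2
        have h2 : (j:ℕ) < t m := by
          have := tanti m (L (j:ℕ)) hm
          omega
        have hvn : t (L (j:ℕ)) - m + 1 = t (L (j:ℕ)) - m + 1 := rfl
        have : (g j).isSome := by
          rw [hg]
          simp only [hsome]
          have hb := vbound m (j:ℕ) _ j.2 hsome
          simp [hb]
        simp [this, h2]
  have hfilter : (Finset.univ.filter fun j : Fin n => (g j).isSome)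
      = Finset.univ.filter (fun j : Fin n => (j:ℕ) < t m) := by
    apply Finset.filter_congr
    intro j _
    simp [hiff j]
  rw [hfilter]
  have htm : t m ≤ n := by have := tanti 0 m (Nat.zero_le m); omega
  rw [← Finset.card_range (t m)]
  apply Finset.card_bij (fun (j : Fin n) _ => (j:ℕ))
  · intro j hj
    simp only [Finset.mem_filter, Finset.mem_univ, true_and] at hj
    simpa using hj
  · intro j hj j' hj' h
    exact Fin.ext h
  · intro x hx
    simp only [Finset.mem_range] at hx
    exact ⟨⟨x, by omega⟩, by simp [hx], rfl⟩


theorem rank_function_equation_general_solution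
    {F : Type*} [Field F] [CharZero F] {n k : ℕ} (hn : 2 ≤ n) (hk : 2 ≤ k)
    (f : ℝ → ℝ) (hmono : StrictMonoOn f (Set.Ici 0)) (hconv : ConvexOn ℝ (Set.Ici 0) f)
    (hf0 : f 0 = 0) (hfN : ∀ a : ℕ, ∃ b : ℕ, f a = b)
    (A : Fin k → Matrix (Fin n) (Fin n) F)
    (q : Fin k → ℕ) (hq : ∀ j, ((A j) ^ n).rank = q j)
    (r : ℕ → ℝ) (hr : ∀ m, r m = ∑ j : Fin k, f (((A j) ^ m).rank : ℝ)) :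
    (∃ B : Matrix (Fin n) (Fin n) F,
        ∀ m : ℕ, 1 ≤ m → m ≤ n → r m = ((B ^ m).rank : ℝ)) ↔
      2 * r 1 - r 2 ≤ (n : ℝ) := by
  constructor
  · rintro ⟨B, hB⟩
    have e1 : r 1 = ((B ^ 1).rank : ℝ) := hB 1 le_rfl (by omega)
    have e2 : r 2 = ((B ^ 2).rank : ℝ) := hB 2 (by omega) hn
    have hs := rank_sylvester B
    rw [pow_one] at e1
    have hsR : (B.rank : ℝ) + B.rank ≤ (n : ℝ) + ((B ^ 2).rank : ℝ) := by
      exact_mod_cast hs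
    rw [e1, e2]
    linarith
  · intro hle
    classical
    choose bf hbf using hfN
    set s : ℕ → ℕ := fun m => ∑ j : Fin k, bf ((A j ^ m).rank) with hs
    have hrs : ∀ m, r m = (s m : ℝ) := by
      intro m
      rw [hr m, hs]
      push_cast
      exact Finset.sum_congr rfl (fun j _ => hbf _)
    have hmem : ∀ x : ℕ, (x : ℝ) ∈ Set.Ici (0:ℝ) := fun x => Set.mem_Ici.mpr (Nat.cast_nonneg x)
    have hmonoN : ∀ a b : ℕ, a ≤ b → bf a ≤ bf b := by
      intro a b hab
      have h1 : f a ≤ f b := hmono.monotoneOn (hmem a) (hmem b) (Nat.cast_le.mpr hab)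
      rw [hbf a, hbf b] at h1
      exact_mod_cast h1
    have freal : ∀ a b c : ℕ, c ≤ b → b ≤ a → 2 * b ≤ a + c → 2 * bf b ≤ bf a + bf c := by
      intro a b c hcb hba h2b
      have h1 : (b:ℝ) ≤ ((a:ℝ) + c) / 2 := by
        have : (2 * b : ℝ) ≤ (a : ℝ) + c := by exact_mod_cast h2b
        linarith
      have hmem2 : ((a:ℝ) + c) / 2 ∈ Set.Ici (0:ℝ) := by
        have := Nat.cast_nonneg (α := ℝ) a
        have := Nat.cast_nonneg (α := ℝ) c
        simp only [Set.mem_Ici]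
        linarith
      have h2 : f b ≤ f (((a:ℝ) + c) / 2) := hmono.monotoneOn (hmem b) hmem2 h1
      have h3 := hconv.2 (hmem a) (hmem c) (by norm_num : (0:ℝ) ≤ 1/2) (by norm_num : (0:ℝ) ≤ 1/2)
        (by norm_num : (1:ℝ)/2 + 1/2 = 1)
      simp only [smul_eq_mul] at h3
      have h4 : ((a:ℝ) + c) / 2 = 1/2 * (a:ℝ) + 1/2 * (c:ℝ) := by ring
      rw [h4] at h2
      have h5 : 2 * f (b:ℝ) ≤ f a + f c := by linarith
      rw [hbf a, hbf b, hbf c] at h5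
      exact_mod_cast h5
    have hrk : ∀ (j : Fin k) m, ((A j) ^ (m+1)).rank ≤ ((A j) ^ m).rank := by
      intro j m
      rw [pow_succ]
      exact Matrix.rank_mul_le_left _ _
    have hrk2 : ∀ (j : Fin k) m, ((A j) ^ (m+2)).rank ≤ ((A j) ^ (m+1)).rank := by
      intro j m
      have := hrk j (m+1)
      rwa [show m+1+1 = m+2 from rfl] at this
    have hsdec : ∀ m, s (m+1) ≤ s m := by
      intro m
      exact Finset.sum_le_sum (fun j _ => hmonoN _ _ (hrk j m))
    have hsconv : ∀ m, 2 * s (m+1) ≤ s m + s (m+2) := by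
      intro m
      have hj : ∀ j : Fin k, 2 * bf ((A j ^ (m+1)).rank) ≤
          bf ((A j ^ m).rank) + bf ((A j ^ (m+2)).rank) := by
        intro j
        exact freal _ _ _ (hrk2 j m) (hrk j m) (rank_pow_convex (A j) m)
      calc 2 * s (m+1) = ∑ j : Fin k, 2 * bf ((A j ^ (m+1)).rank) := by
            rw [hs, Finset.mul_sum]
        _ ≤ ∑ j : Fin k, (bf ((A j ^ m).rank) + bf ((A j ^ (m+2)).rank)) :=
            Finset.sum_le_sum (fun j _ => hj j)
        _ = s m + s (m+2) := by rw [hs, Finset.sum_add_distrib]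
    have hleN : 2 * s 1 ≤ n + s 2 := by
      have h1 : (2 * s 1 : ℝ) ≤ (n : ℝ) + (s 2 : ℝ) := by
        rw [hrs 1, hrs 2] at hle
        linarith
      exact_mod_cast h1
    set t : ℕ → ℕ := fun m => if m = 0 then n else s m with ht
    have ht0 : t 0 = n := rfl
    have tval : ∀ m : ℕ, t (m+1) = s (m+1) := by
      intro m
      simp only [ht]
      rw [if_neg (by omega)]
    have hdec : ∀ m, t (m+1) ≤ t m := by
      intro m
      cases m with
      | zero =>
        have h1 := hsdec 1
        rw [show (1:ℕ)+1 = 2 from rfl] at h1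
        rw [tval 0, ht0, show (0:ℕ)+1 = 1 from rfl]
        omega
      | succ m =>
        rw [tval (m+1), tval m]
        exact hsdec (m+1)
    have hcv : ∀ m, 2 * t (m+1) ≤ t m + t (m+2) := by
      intro m
      cases m with
      | zero =>
        rw [tval 0, tval 1, ht0, show (0:ℕ)+1 = 1 from rfl, show (1:ℕ)+1 = 2 from rfl]
        exact hleN
      | succ m =>
        rw [tval (m+1), tval m, tval (m+2)]
        exact hsconv (m+1)
    obtain ⟨B, hBr⟩ := exists_B F n (by omega) t ht0 hdec hcv
    refine ⟨B, fun m h1 h2 => ?_⟩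
    rw [hrs m, hBr m h1 h2]
    obtain ⟨m', rfl⟩ : ∃ m', m = m' + 1 := ⟨m - 1, by omega⟩
    rw [tval m']
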